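/- Every finite tree on n vertices has a vertex v (a centroid) such that every connected component of the graph obtained by deleting v has at most n/2 vertices (i.e., twice its number of vertices is at most n). -/

import Mathlib

open SimpleGraph

section
variable {V : Type*} {T : SimpleGraph V}

def ReachAvoid (T : SimpleGraph V) (v x y : V) : Prop :=
  ∃ p : T.Walk x y, v ∉ p.support

/-- Unique neighbor: in an acyclic graph, two neighbors of `v` connected avoiding `v` are equal. -/
lemma uniqueNbr (hA : T.IsAcyclic) {v w z : V} (hw : T.Adj v w) (hz : T.Adj v z)
    (h : ReachAvoid T v w z) : w = z := by
  classical
  by_contra hne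
  obtain ⟨p, hp⟩ := h
  have h1 : v ∉ p.toPath.1.support := fun hv => hp (Walk.support_toPath_subset p hv)
  have hq : (Walk.cons hw.symm (Walk.cons hz Walk.nil)).IsPath := by
    simp [Walk.isPath_def, Walk.support_cons, List.nodup_cons, hw.ne', hz.ne, hne]
  have := hA.path_unique p.toPath ⟨_, hq⟩
  rw [this] at h1
  simp [Walk.support_cons] at h1
end

section
variable {V : Type*} {T : SimpleGraph V}

lemma ReachAvoid.ne_right {v x y : V} (h : ReachAvoid T v x y) : y ≠ v := by
  obtain ⟨p, hp⟩ := h; rintro rfl; exact hp p.end_mem_support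

lemma ReachAvoid.symm' {v x y : V} (h : ReachAvoid T v x y) : ReachAvoid T v y x := by
  obtain ⟨p, hp⟩ := h; exact ⟨p.reverse, by simpa using hp⟩

lemma ReachAvoid.trans' {v x y z : V} (h : ReachAvoid T v x y) (h' : ReachAvoid T v y z) :
    ReachAvoid T v x z := by
  obtain ⟨p, hp⟩ := h; obtain ⟨q, hq⟩ := h'
  exact ⟨p.append q, by simp [Walk.mem_support_append_iff, hp, hq]⟩

/-- No walk from the component of `w` back to `v` avoiding `w`. -/
lemma noEscape (hA : T.IsAcyclic) {v w x : V} (hw : T.Adj v w) (hx : ReachAvoid T v w x) :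
    ¬ ReachAvoid T w x v := by
  classical
  rintro ⟨q0, hq0⟩
  have hxnv : x ≠ v := hx.ne_right
  have hpp : (q0.toPath.1.reverse).IsPath := q0.toPath.2.reverse
  have hwp : w ∉ (q0.toPath.1.reverse).support := by
    rw [Walk.support_reverse, List.mem_reverse]
    exact fun h => hq0 (Walk.support_toPath_subset q0 h)
  obtain ⟨z, hadj, r, hr⟩ := Walk.exists_eq_cons_of_ne hxnv.symm q0.toPath.1.reverse
  rw [hr] at hpp hwp
  rw [Walk.cons_isPath_iff] at hpp
  have hzw : z ≠ w := by
    rintro rfl; exact hwp (by simp)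
  have h1 : ReachAvoid T v z x := ⟨r, hpp.2⟩
  exact hzw (uniqueNbr hA hw hadj (hx.trans' h1.symm')).symm

lemma stayIn (hA : T.IsAcyclic) {v w x y : V} (hw : T.Adj v w) (hx : ReachAvoid T v w x)
    (hxy : ReachAvoid T w x y) : ReachAvoid T v x y := by
  classical
  obtain ⟨q, hq⟩ := hxy
  by_cases hv : v ∈ q.support
  · exact absurd ⟨q.takeUntil v hv, fun h => hq (Walk.support_takeUntil_subset q hv h)⟩
      (noEscape hA hw hx)
  · exact ⟨q, hv⟩

end

section
variable {V : Type*} [Fintype V] {T : SimpleGraph V}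

def compSet (T : SimpleGraph V) (v u : V) : Set V := {x | ReachAvoid T v u x}

lemma ReachAvoid.ne_left' {v x y : V} (h : ReachAvoid T v x y) : x ≠ v := by
  obtain ⟨p, hp⟩ := h; rintro rfl; exact hp p.start_mem_support

theorem core (T : SimpleGraph V) (hT : T.IsTree) :
    ∃ v : V, ∀ u : V, 2 * (compSet T v u).ncard ≤ Fintype.card V := by
  classical
  have hA := hT.IsAcyclic
  haveI : Nonempty V := hT.isConnected.nonempty
  obtain ⟨v, -, hmin⟩ := Finset.exists_min_image Finset.univ
    (fun v => Finset.univ.sup fun u => (compSet T v u).ncard) ⟨Classical.arbitrary V, by simp⟩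
  set F : V → ℕ := fun v => Finset.univ.sup fun u => (compSet T v u).ncard with hF
  refine ⟨v, fun u => ?_⟩
  by_contra hbig
  push_neg at hbig
  set C : Set V := compSet T v u with hC
  set n := Fintype.card V with hn
  have hcard : C.ncard + Cᶜ.ncard = n := by
    rw [Set.ncard_add_ncard_compl, Nat.card_eq_fintype_card]
  have hCpos : 0 < C.ncard := by omega
  have huv : u ≠ v := by
    obtain ⟨x, hx⟩ := Set.nonempty_of_ncard_ne_zero (by omega : C.ncard ≠ 0)
    exact hx.ne_left'
  -- find the neighbor w of v in C
  obtain ⟨z, hadj, r, hr⟩ := Walk.exists_eq_cons_of_ne (Ne.symm huv)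
    (hT.isConnected v u).some.toPath.1
  have hrp : v ∉ r.support := by
    have := (hT.isConnected v u).some.toPath.2
    rw [hr, Walk.cons_isPath_iff] at this
    exact this.2
  have hzu : ReachAvoid T v z u := ⟨r, hrp⟩
  set w := z
  have hwC : w ∈ C := hzu.symm'
  have hCF : C.ncard ≤ F v := by
    refine Finset.le_sup (f := fun u => (compSet T v u).ncard) (Finset.mem_univ u)
  -- every component of T - w is small
  have key : ∀ s, (compSet T w s).ncard < C.ncard := by
    intro s
    by_cases hs : s ∈ C
    · have hsub : compSet T w s ⊆ C \ {w} := by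
        rintro y ⟨q, hq⟩
        have hws : ReachAvoid T v w s := hwC.symm'.trans' hs
        have h1 : ReachAvoid T v s y := stayIn hA hadj hws ⟨q, hq⟩
        refine ⟨hs.trans' h1, ?_⟩
        simp only [Set.mem_singleton_iff]
        exact (ReachAvoid.ne_right ⟨q, hq⟩ : y ≠ w)
      calc (compSet T w s).ncard ≤ (C \ {w}).ncard :=
            Set.ncard_le_ncard hsub (C.toFinite.diff)
        _ < C.ncard := Set.ncard_diff_singleton_lt_of_mem hwC C.toFinite
    · have hsub : compSet T w s ⊆ Cᶜ := by
        rintro y hy hyC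
        have hwy : ReachAvoid T v w y := hwC.symm'.trans' hyC
        have h1 : ReachAvoid T v y s := stayIn hA hadj hwy hy.symm'
        exact hs (hyC.trans' h1)
      calc (compSet T w s).ncard ≤ Cᶜ.ncard := Set.ncard_le_ncard hsub (Cᶜ.toFinite)
        _ < C.ncard := by omega
  have hFw : F w < F v := by
    rw [hF]
    refine (Finset.sup_lt_iff (lt_of_lt_of_le hCpos hCF : (⊥ : ℕ) < F v)).2
      fun s _ => lt_of_lt_of_le (key s) hCF
  have h2 : F v ≤ F w := hmin w (Finset.mem_univ w)
  omega

end

section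
variable {V : Type*} {T : SimpleGraph V}

lemma induce_reachable_of_walk {S : Set V} {a b : V} (p : T.Walk a b)
    (hp : ∀ z ∈ p.support, z ∈ S) :
    (T.induce S).Reachable ⟨a, hp a p.start_mem_support⟩ ⟨b, hp b p.end_mem_support⟩ := by
  induction p with
  | nil => rfl
  | cons h q ih =>
    rename_i x y c
    have hx : x ∈ S := hp x (by simp)
    have hq : ∀ z ∈ q.support, z ∈ S := fun z hz => hp z (by simp [hz])
    have hadj : (T.induce S).Adj ⟨x, hx⟩ ⟨y, hq y q.start_mem_support⟩ := by
      simpa using h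
    exact hadj.reachable.trans (ih hq)

lemma reachAvoid_iff {v : V} {a b : V} (ha : a ≠ v) (hb : b ≠ v) :
    ReachAvoid T v a b ↔
      (T.induce {u : V | u ≠ v}).Reachable ⟨a, ha⟩ ⟨b, hb⟩ := by
  constructor
  · rintro ⟨p, hp⟩
    exact induce_reachable_of_walk p fun z hz => fun h : z = v => hp (h ▸ hz)
  · rintro ⟨q⟩
    refine ⟨q.map (SimpleGraph.Embedding.induce {u : V | u ≠ v}).toHom, fun hv => ?_⟩
    erw [Walk.support_map, List.mem_map] at hv
    obtain ⟨⟨z, hz⟩, -, h⟩ := hv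
    exact hz h
end


/-- **Centroid existence.** Every finite tree on `n` vertices has a vertex `v` such that
every connected component of the graph obtained by deleting `v` (the induced subgraph on
the remaining vertices) has at most `n / 2` vertices, i.e. twice its size is at most `n`. -/
theorem tree_exists_centroid {V : Type*} [Fintype V] (T : SimpleGraph V) (hT : T.IsTree) :
    ∃ v : V, ∀ C : (T.induce {u : V | u ≠ v}).ConnectedComponent,
      2 * C.supp.ncard ≤ Fintype.card V := by
  classical
  obtain ⟨v, hv⟩ := core T hT
  refine ⟨v, fun C => ?_⟩
  obtain ⟨⟨x, hx⟩, rfl⟩ := C.exists_rep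
  have himg : Subtype.val ''
      ((T.induce {u : V | u ≠ v}).connectedComponentMk ⟨x, hx⟩).supp = compSet T v x := by
    ext y
    constructor
    · rintro ⟨⟨y, hy⟩, hmem, rfl⟩
      rw [ConnectedComponent.mem_supp_iff, ConnectedComponent.eq] at hmem
      exact ((reachAvoid_iff hy hx).2 hmem).symm'
    · intro h
      refine ⟨⟨y, h.ne_right⟩, ?_, rfl⟩
      rw [ConnectedComponent.mem_supp_iff, ConnectedComponent.eq]
      exact (reachAvoid_iff h.ne_right hx).1 h.symm'
  have := hv x
  rwa [← himg, Set.ncard_image_of_injective _ Subtype.val_injective] at this
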